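/- For every λ ∈ (1/2, 1) and every α > 1, the Hausdorff dimension of E_λ(α) is at most 1/α. -/

import Mathlib

open MeasureTheory Filter Set
open scoped ENNReal

/-- The set `F_{λ,n}` of partial sums `(1-λ)∑_{k=0}^n a_k λ^k`, `a_k ∈ {0,1}`. -/
def Fset (lam : ℝ) (n : ℕ) : Set ℝ :=
  {y | ∃ a : ℕ → ℝ, (∀ k, a k = 0 ∨ a k = 1) ∧
    y = (1 - lam) * ∑ k ∈ Finset.range (n + 1), a k * lam ^ k}

/-- The set `E_{λ,n}(α)` of points of `[0,1]` within `2^{-αn}` of `F_{λ,n}`. -/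
noncomputable def Eapprox (lam al : ℝ) (n : ℕ) : Set ℝ :=
  {x ∈ Set.Icc (0 : ℝ) 1 | ∃ y ∈ Fset lam n, |x - y| < (2 : ℝ) ^ (-(al * n))}

/-- The set `E_λ(α) = limsup_n E_{λ,n}(α)`. -/
noncomputable def Elimsup (lam al : ℝ) : Set ℝ :=
  ⋂ N : ℕ, ⋃ n : ℕ, ⋃ (_ : N ≤ n), Eapprox lam al n

/-- Bool-coded element of `F_{λ,n}`. -/
noncomputable def ycode (lam : ℝ) (n : ℕ) (b : Fin (n + 1) → Bool) : ℝ :=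
  (1 - lam) * ∑ k : Fin (n + 1), (if b k then (1 : ℝ) else 0) * lam ^ (k : ℕ)

lemma Fset_eq_ycode {lam : ℝ} {n : ℕ} {y : ℝ} (hy : y ∈ Fset lam n) :
    ∃ b : Fin (n + 1) → Bool, y = ycode lam n b := by
  classical
  obtain ⟨a, ha, rfl⟩ := hy
  refine ⟨fun k => if a (k : ℕ) = 1 then true else false, ?_⟩
  unfold ycode
  congr 1
  rw [← Fin.sum_univ_eq_sum_range (fun k => a k * lam ^ k) (n + 1)]
  refine Finset.sum_congr rfl fun k _ => ?_
  rcases ha (k : ℕ) with h | h <;> simp [h]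

theorem stmt16 (lam al : ℝ) (hlam : lam ∈ Set.Ioo (1 / 2 : ℝ) 1) (hal : 1 < al) :
    dimH (Elimsup lam al) ≤ ENNReal.ofReal (1 / al) := by
  have hal0 : (0 : ℝ) < al := lt_trans one_pos hal
  refine dimH_le fun d' hd' => ?_
  by_contra hlt
  push_neg at hlt
  set d : ℝ := (d' : ℝ) with hdd
  have hd0 : 0 ≤ d := d'.coe_nonneg
  have h1 : 1 / al < d := by
    rw [← ENNReal.ofReal_coe_nnreal] at hlt
    exact (ENNReal.ofReal_lt_ofReal_iff_of_nonneg (by positivity)).1 hlt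
  have hαd : 1 < al * d := by
    rw [div_lt_iff₀ hal0] at h1; linarith [h1]
  -- radii
  set ρ : ℕ → ℝ := fun m => (2 : ℝ) ^ (-(al * m)) with hρ
  have hρpos : ∀ m, 0 < ρ m := fun m => Real.rpow_pos_of_pos two_pos _
  have hρanti : ∀ {m m' : ℕ}, m ≤ m' → ρ m' ≤ ρ m := by
    intro m m' h
    apply Real.rpow_le_rpow_of_exponent_le one_le_two
    have : (m : ℝ) ≤ m' := by exact_mod_cast h
    nlinarith
  -- the real-valued bound sequence
  set q : ℝ := (2 : ℝ) ^ (1 - al * d) with hq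
  set C : ℝ := (2 : ℝ) ^ (1 + d) with hC
  have hq0 : 0 ≤ q := (Real.rpow_pos_of_pos two_pos _).le
  have hq1 : q < 1 := Real.rpow_lt_one_of_one_lt_of_neg one_lt_two (by linarith)
  set g : ℕ → ℝ := fun m => (2 : ℝ) ^ (m + 1) * (2 * ρ m) ^ d with hg
  have hgpos : ∀ m, 0 < g m := by
    intro m
    exact mul_pos (by positivity) (Real.rpow_pos_of_pos (by positivity) _)
  have hgCq : ∀ m, g m = C * q ^ m := by
    intro m
    have e1 : (2 : ℝ) * ρ m = (2 : ℝ) ^ (1 - al * m) := by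
      rw [hρ, sub_eq_add_neg, Real.rpow_add two_pos, Real.rpow_one]
    have e2 : ((2 : ℝ) ^ (1 - al * m)) ^ d = (2 : ℝ) ^ ((1 - al * m) * d) :=
      (Real.rpow_mul (by norm_num) _ _).symm
    have e3 : (2 : ℝ) ^ (m + 1) = (2 : ℝ) ^ ((m + 1 : ℕ) : ℝ) :=
      (Real.rpow_natCast 2 (m + 1)).symm
    have e4 : q ^ m = (2 : ℝ) ^ ((1 - al * d) * m) := by
      rw [hq, ← Real.rpow_natCast ((2:ℝ) ^ (1 - al * d)) m, ← Real.rpow_mul (by norm_num)]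
    simp only [hg, hC]
    rw [e1, e2, e3, e4, ← Real.rpow_add two_pos, ← Real.rpow_add two_pos]
    congr 1
    push_cast
    ring
  have hgsum : Summable g := by
    rw [funext hgCq]
    exact (summable_geometric_of_lt_one hq0 hq1).mul_left C
  -- ennreal version
  set f : ℕ → ℝ≥0∞ := fun m => (2 : ℝ≥0∞) ^ (m + 1) * ENNReal.ofReal (2 * ρ m) ^ d with hf
  have hfg : ∀ m, f m = ENNReal.ofReal (g m) := by
    intro m
    simp only [hf, hg]
    have h1 : ENNReal.ofReal ((2:ℝ) ^ (m + 1) * (2 * ρ m) ^ d) =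
        ENNReal.ofReal ((2:ℝ) ^ (m + 1)) * ENNReal.ofReal ((2 * ρ m) ^ d) :=
      ENNReal.ofReal_mul (by positivity)
    rw [h1, ← ENNReal.ofReal_rpow_of_pos (show (0:ℝ) < 2 * ρ m by positivity),
      ENNReal.ofReal_pow (by norm_num : (0:ℝ) ≤ 2), ENNReal.ofReal_ofNat]
  have hfsum : ∑' m, f m ≠ ∞ := by
    rw [funext hfg, ← ENNReal.ofReal_tsum_of_nonneg (fun m => (hgpos m).le) hgsum]
    exact ENNReal.ofReal_ne_top
  -- covering sets
  set ι : ℕ → Type := fun N => Σ n : ℕ, (Fin (n + N + 1) → Bool) with hι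
  set t : ∀ N : ℕ, ι N → Set ℝ := fun N i =>
    Set.Icc (ycode lam (i.1 + N) i.2 - ρ (i.1 + N)) (ycode lam (i.1 + N) i.2 + ρ (i.1 + N))
    with ht
  have hdiam : ∀ N (i : ι N), EMetric.diam (t N i) = ENNReal.ofReal (2 * ρ (i.1 + N)) := by
    intro N i
    rw [ht]
    rw [show EMetric.diam = @Metric.ediam ℝ _ from rfl, Real.ediam_Icc]
    congr 1
    ring
  -- apply the covering bound
  have key : μH[d] (Elimsup lam al) ≤
      liminf (fun N => ∑' i : ι N, EMetric.diam (t N i) ^ d) atTop := by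
    apply Measure.hausdorffMeasure_le_liminf_tsum d _
      (fun N => ENNReal.ofReal (2 * ρ N)) _ t
    · -- diam bounds
      refine Eventually.of_forall fun N i => ?_
      rw [show Metric.ediam (t N i) = EMetric.diam (t N i) from rfl, hdiam]
      exact ENNReal.ofReal_le_ofReal (by
        have := hρanti (Nat.le_add_left N i.1); nlinarith [this])
    · -- covering
      refine Eventually.of_forall fun N x hx => ?_
      simp only [Elimsup, mem_iInter, mem_iUnion] at hx
      obtain ⟨m, hNm, hxm⟩ := hx N
      obtain ⟨n, rfl⟩ : ∃ n, m = n + N := ⟨m - N, (Nat.sub_add_cancel hNm).symm⟩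
      obtain ⟨-, y, hyF, hxy⟩ := hxm
      obtain ⟨b, rfl⟩ := Fset_eq_ycode hyF
      refine mem_iUnion.2 ⟨⟨n, b⟩, ?_⟩
      rw [ht]
      rw [abs_sub_lt_iff] at hxy
      constructor <;> simp only <;> [linarith [hxy.2]; linarith [hxy.1]]
    · -- radii tend to zero
      rw [show (0 : ℝ≥0∞) = ENNReal.ofReal 0 by simp]
      apply ENNReal.tendsto_ofReal
      have : ∀ N : ℕ, 2 * ρ N = 2 * ((2 : ℝ) ^ (-al)) ^ N := by
        intro N
        congr 1
        rw [hρ, ← Real.rpow_natCast ((2:ℝ) ^ (-al)) N, ← Real.rpow_mul (by norm_num), neg_mul]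
      rw [funext this, show (0:ℝ) = 2 * 0 by ring]
      exact (tendsto_pow_atTop_nhds_zero_of_lt_one
        (Real.rpow_pos_of_pos two_pos _).le
        (Real.rpow_lt_one_of_one_lt_of_neg one_lt_two (by linarith))).const_mul 2
  -- compute the sums
  have hsum : ∀ N, (∑' i : ι N, EMetric.diam (t N i) ^ d) = ∑' n : ℕ, f (n + N) := by
    intro N
    rw [ENNReal.tsum_sigma' (fun i : ι N => EMetric.diam (t N i) ^ d)]
    refine tsum_congr fun n => ?_
    rw [tsum_fintype]
    have : ∀ b : Fin (n + N + 1) → Bool,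
        EMetric.diam (t N ⟨n, b⟩) ^ d = ENNReal.ofReal (2 * ρ (n + N)) ^ d := by
      intro b; rw [hdiam]
    rw [Finset.sum_congr rfl fun b _ => this b, Finset.sum_const, nsmul_eq_mul, hf]
    congr 1
    simp [Fintype.card_fun]
  have hlim0 : Tendsto (fun N => ∑' i : ι N, EMetric.diam (t N i) ^ d) atTop (nhds 0) := by
    rw [funext hsum]
    exact ENNReal.tendsto_sum_nat_add f hfsum
  have h0 : μH[d] (Elimsup lam al) = 0 :=
    le_antisymm (key.trans_eq hlim0.liminf_eq) zero_le
  rw [hdd] at h0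
  rw [hd'] at h0
  exact ENNReal.top_ne_zero h0
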